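/- Let N = (V, E⃗) be a directed network, S, T disjoint nonempty subsets of V, 0 < θ < 1/9, and f: E⃗ → [0,∞) a (possibly improper) flow with size(f) = (1/2)Σ_{v∈V}|f⁺(v)| satisfying: (a) Σ_{v ∈ V∖(S∪T)} |f⁺(v)| ≤ θ·size(f), and (b) Σ_{v∈S}|f⁺(v) − size(f)/|S|| + Σ_{v∈T}|f⁻(v) − size(f)/|T|| ≤ θ·size(f). Then there exists a proper ST flow g with: (1) 0 ≤ g(e⃗) ≤ f(e⃗) for all e⃗; (2) g⁺(s) ≥ 0 for all s ∈ S, g⁻(t) ≥ 0 for all t ∈ T, and vol(g) = Σ_{s∈S} g⁺(s) = Σ_{t∈T} g⁻(t) ≥ (1−2θ)·size(f); (3) Σ_{v∈S}|g⁺(v) − vol(g)/|S|| + Σ_{v∈T}|g⁻(v) − vol(g)/|T|| ≤ 9θ·vol(g). -/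

import Mathlib

open Finset

/-- The net outflow of `g` at `x` in a finite directed network (flows on ordered pairs). -/
def netOut {V : Type*} [Fintype V] (g : V → V → ℝ) (x : V) : ℝ :=
  ∑ y, (g x y - g y x)

set_option linter.unusedSectionVars false

namespace Aux17
variable {V : Type*} [Fintype V] [DecidableEq V]

lemma netOut_add (f g : V → V → ℝ) (x : V) :
    netOut (fun a b => f a b + g a b) x = netOut f x + netOut g x := by
  unfold netOut
  rw [← Finset.sum_add_distrib]
  exact Finset.sum_congr rfl fun y _ => by ring

lemma netOut_sub (f g : V → V → ℝ) (x : V) :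
    netOut (fun a b => f a b - g a b) x = netOut f x - netOut g x := by
  unfold netOut
  rw [← Finset.sum_sub_distrib]
  exact Finset.sum_congr rfl fun y _ => by ring

lemma sum_netOut (f : V → V → ℝ) : ∑ v, netOut f v = 0 := by
  have h : ∑ x, ∑ y, f x y = ∑ x, ∑ y, f y x := Finset.sum_comm
  simp [netOut, Finset.sum_sub_distrib, h]

lemma netOut_edge (a b : V) (w : ℝ) (x : V) :
    netOut (fun p q => if p = a ∧ q = b then w else 0) x
      = (if x = a then w else 0) - (if x = b then w else 0) := by
  have h1 : ∑ y, (if x = a ∧ y = b then w else 0) = if x = a then w else 0 := by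
    rw [Finset.sum_congr rfl (fun y _ => show (if x = a ∧ y = b then w else 0)
      = if y = b then (if x = a then w else 0) else 0 by
        by_cases hx : x = a <;> by_cases hy : y = b <;> simp [hx, hy])]
    simp
  have h2 : ∑ y, (if y = a ∧ x = b then w else 0) = if x = b then w else 0 := by
    rw [Finset.sum_congr rfl (fun y _ => show (if y = a ∧ x = b then w else 0)
      = if y = a then (if x = b then w else 0) else 0 by
        by_cases hx : x = b <;> by_cases hy : y = a <;> simp [hx, hy])]
    simp
  unfold netOut
  rw [Finset.sum_sub_distrib, h1, h2]

/-- last vertex of the walk `a :: l`. -/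
def lastOf (a : V) : List V → V
  | [] => a
  | b :: l => lastOf b l

@[simp] lemma lastOf_nil (a : V) : lastOf a ([] : List V) = a := rfl
@[simp] lemma lastOf_cons (a b : V) (l : List V) : lastOf a (b :: l) = lastOf b l := rfl

lemma lastOf_append_cons (x y : V) (u v : List V) :
    lastOf x (u ++ y :: v) = lastOf y v := by
  induction u generalizing x with
  | nil => rfl
  | cons c u ih => simpa using ih c

lemma chain_snoc {r : V → V → Prop} (a c : V) (l : List V)
    (h : List.Chain r a l) (hc : r (lastOf a l) c) :
    List.Chain r a (l ++ [c]) ∧ lastOf a (l ++ [c]) = c := by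
  induction l generalizing a with
  | nil => exact ⟨List.Chain.cons hc List.Chain.nil, rfl⟩
  | cons b l ih =>
    rcases List.chain_cons.1 h with ⟨hab, hl⟩
    have := ih b hl (by simpa using hc)
    exact ⟨List.chain_cons.2 ⟨hab, this.1⟩, by simpa using this.2⟩

lemma exists_chain_lastOf {r : V → V → Prop} {a b : V}
    (h : Relation.ReflTransGen r a b) :
    ∃ l, List.Chain r a l ∧ lastOf a l = b := by
  induction h with
  | refl => exact ⟨[], List.Chain.nil, rfl⟩
  | tail _ hbc ih =>
    obtain ⟨l, hl, hlast⟩ := ih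
    obtain ⟨h1, h2⟩ := chain_snoc a _ l hl (hlast ▸ hbc)
    exact ⟨l ++ [_], h1, h2⟩

lemma exists_nodup_chain {r : V → V → Prop} :
    ∀ n (l : List V) (a : V), l.length ≤ n → List.Chain r a l →
    ∃ l', List.Chain r a l' ∧ (a :: l').Nodup ∧ lastOf a l' = lastOf a l ∧
      l'.length ≤ l.length := by
  intro n
  induction n with
  | zero =>
    intro l a hl _
    have : l = [] := List.eq_nil_of_length_eq_zero (Nat.le_zero.1 hl)
    subst this
    exact ⟨[], List.Chain.nil, by simp, rfl, le_rfl⟩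
  | succ n ih =>
    intro l a hl hch
    match l with
    | [] => exact ⟨[], List.Chain.nil, by simp, rfl, le_rfl⟩
    | c :: t =>
      rcases List.chain_cons.1 hch with ⟨hac, hct⟩
      obtain ⟨t', ht'ch, ht'nd, ht'last, ht'len⟩ :=
        ih t c (Nat.le_of_succ_le_succ hl) hct
      by_cases hmem : a ∈ c :: t'
      · obtain ⟨s, t₂, hdecomp⟩ := List.append_of_mem hmem
        have hch2 : List.Chain r a (s ++ a :: t₂) := by
          rw [← hdecomp]; exact List.chain_cons.2 ⟨hac, ht'ch⟩
        have ht₂ : List.Chain r a t₂ := (List.isChain_cons_split.1 (show List.IsChain r (a :: (s ++ a :: t₂)) from hch2)).2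
        have hnd2 : (a :: t₂).Nodup := by
          refine List.Nodup.sublist ?_ ht'nd
          rw [hdecomp]; exact List.sublist_append_right s (a :: t₂)
        have hlast2 : lastOf a t₂ = lastOf c t' := by
          rw [show lastOf c t' = lastOf c (s ++ a :: t₂) from by
            cases s with
            | nil => simp at hdecomp; simp [hdecomp.1, hdecomp.2]
            | cons d s => simp at hdecomp; simp [hdecomp.1, hdecomp.2]
          ]
          cases s with
          | nil => simp
          | cons d s => simp [lastOf_append_cons]
        have hlen2 : t₂.length ≤ t.length := by
          have : (c :: t').length = (s ++ a :: t₂).length := by rw [hdecomp]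
          simp at this
          omega
        exact ⟨t₂, ht₂, hnd2, by simpa using hlast2.trans ht'last, by simpa using Nat.le_succ_of_le hlen2⟩
      · exact ⟨c :: t', List.chain_cons.2 ⟨hac, ht'ch⟩, List.nodup_cons.2 ⟨hmem, ht'nd⟩,
          by simpa using ht'last, by simpa using ht'len⟩

def pathFlow (w : ℝ) : List V → V → V → ℝ
  | [] => fun _ _ => 0
  | [_] => fun _ _ => 0
  | a :: b :: rest => fun x y => (if x = a ∧ y = b then w else 0) + pathFlow w (b :: rest) x y

@[simp] lemma pathFlow_nil (w : ℝ) : pathFlow w ([] : List V) = fun _ _ => 0 := rfl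
@[simp] lemma pathFlow_single (w : ℝ) (a : V) : pathFlow w [a] = fun _ _ => 0 := rfl
lemma pathFlow_cons2 (w : ℝ) (a b : V) (rest : List V) (x y : V) :
    pathFlow w (a :: b :: rest) x y
      = (if x = a ∧ y = b then w else 0) + pathFlow w (b :: rest) x y := rfl

lemma pathFlow_nonneg {w : ℝ} (hw : 0 ≤ w) : ∀ (l : List V) (x y : V), 0 ≤ pathFlow w l x y
  | [], _, _ => le_rfl
  | [_], _, _ => le_rfl
  | a :: b :: rest, x, y => by
      have h2 := pathFlow_nonneg hw (b :: rest) x y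
      rw [pathFlow_cons2]
      have : (0:ℝ) ≤ (if x = a ∧ y = b then w else 0) := by positivity
      linarith

lemma pathFlow_eq_zero (w : ℝ) : ∀ (l : List V) (x y : V), x ∉ l → pathFlow w l x y = 0
  | [], _, _, _ => rfl
  | [_], _, _, _ => rfl
  | a :: b :: rest, x, y, hx => by
      have hxa : ¬(x = a) := fun h => hx (by simp [h])
      have h2 := pathFlow_eq_zero w (b :: rest) x y (fun h => hx (List.mem_cons_of_mem _ h))
      rw [pathFlow_cons2, h2]
      simp [hxa]

lemma netOut_pathFlow (w : ℝ) : ∀ (a : V) (l : List V), (a :: l).Nodup → ∀ x,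
    netOut (pathFlow w (a :: l)) x
      = (if x = a then w else 0) - (if x = lastOf a l then w else 0)
  | a, [], _, x => by simp [netOut]; split_ifs <;> simp_all
  | a, b :: l, hnd, x => by
      have hab : a ≠ b := by
        have := List.nodup_cons.1 hnd
        exact fun h => this.1 (by simp [h])
      have hnd2 : (b :: l).Nodup := (List.nodup_cons.1 hnd).2
      have ih := netOut_pathFlow w b l hnd2 x
      have : netOut (pathFlow w (a :: b :: l)) x
          = netOut (fun p q => if p = a ∧ q = b then w else 0) x
            + netOut (pathFlow w (b :: l)) x := by
        exact netOut_add _ _ x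
      rw [this, netOut_edge, ih]
      simp only [lastOf_cons]
      split_ifs <;> simp_all

def edgeMin (f : V → V → ℝ) : V → List V → ℝ
  | _, [] => 0
  | a, [b] => f a b
  | a, b :: c :: rest => min (f a b) (edgeMin f b (c :: rest))

@[simp] lemma edgeMin_single (f : V → V → ℝ) (a b : V) : edgeMin f a [b] = f a b := rfl
lemma edgeMin_cons2 (f : V → V → ℝ) (a b c : V) (rest : List V) :
    edgeMin f a (b :: c :: rest) = min (f a b) (edgeMin f b (c :: rest)) := rfl

lemma edgeMin_pos (f : V → V → ℝ) : ∀ (a : V) (l : List V), l ≠ [] →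
    List.Chain (fun p q => 0 < f p q) a l → 0 < edgeMin f a l
  | _, [], h, _ => absurd rfl h
  | a, [b], _, hch => by
      simpa using (List.chain_cons.1 hch).1
  | a, b :: c :: rest, _, hch => by
      rcases List.chain_cons.1 hch with ⟨h1, h2⟩
      have := edgeMin_pos f b (c :: rest) (by simp) h2
      rw [edgeMin_cons2]
      exact lt_min h1 this

lemma pathFlow_le (f : V → V → ℝ) (hf : ∀ x y, 0 ≤ f x y) {w : ℝ} (hw : 0 ≤ w) :
    ∀ (a : V) (l : List V), (a :: l).Nodup → w ≤ edgeMin f a l →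
      ∀ x y, pathFlow w (a :: l) x y ≤ f x y
  | a, [], _, _, x, y => by simpa using hf x y
  | a, [b], hnd, hle, x, y => by
      rw [show pathFlow w [a, b] x y = (if x = a ∧ y = b then w else 0) + 0 from by
        rw [pathFlow_cons2]; simp]
      by_cases h : x = a ∧ y = b
      · simp only [h, if_pos, and_self, add_zero, if_true]
        simpa using hle
      · simpa [h] using hf x y
  | a, b :: c :: rest, hnd, hle, x, y => by
      rw [pathFlow_cons2]
      rcases List.nodup_cons.1 hnd with ⟨hamem, hnd2⟩
      rw [edgeMin_cons2] at hle
      by_cases h : x = a ∧ y = b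
      · have hz : pathFlow w (b :: c :: rest) x y = 0 :=
          pathFlow_eq_zero w _ x y (h.1 ▸ hamem)
        rw [hz, if_pos h, add_zero, h.1, h.2]
        exact hle.trans (min_le_left _ _)
      · rw [if_neg h, zero_add]
        exact pathFlow_le f hf hw b (c :: rest) hnd2 (hle.trans (min_le_right _ _)) x y

lemma edgeMin_attained (f : V → V → ℝ) {w : ℝ} (hw : 0 < w) :
    ∀ (a : V) (l : List V), l ≠ [] → (a :: l).Nodup →
      ∃ x y, edgeMin f a l = f x y ∧ pathFlow w (a :: l) x y = w
  | _, [], h, _ => absurd rfl h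
  | a, [b], _, hnd => by
      refine ⟨a, b, rfl, ?_⟩
      rw [pathFlow_cons2]
      simp
  | a, b :: c :: rest, _, hnd => by
      rcases List.nodup_cons.1 hnd with ⟨hamem, hnd2⟩
      rw [edgeMin_cons2]
      by_cases hmin : f a b ≤ edgeMin f b (c :: rest)
      · refine ⟨a, b, min_eq_left hmin, ?_⟩
        rw [pathFlow_cons2, pathFlow_eq_zero w _ a b hamem]
        simp
      · obtain ⟨x, y, hxy, hpf⟩ := edgeMin_attained f hw b (c :: rest) (by simp) hnd2
        refine ⟨x, y, ?_, ?_⟩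
        · rw [min_eq_right (le_of_lt (lt_of_not_ge hmin)), hxy]
        · rw [pathFlow_cons2, hpf]
          have hxne : ¬(x = a ∧ y = b) := by
            rintro ⟨rfl, rfl⟩
            rw [pathFlow_eq_zero w _ x y hamem] at hpf
            exact hw.ne hpf
          rw [if_neg hxne, zero_add]
open scoped Classical

noncomputable def msr (f : V → V → ℝ) : ℕ :=
  (Finset.univ.filter fun p : V × V => f p.1 p.2 ≠ 0).card +
  (Finset.univ.filter fun v => netOut f v ≠ 0).card

lemma exists_pos_netOut (f : V → V → ℝ) (h : ¬ ∀ v, netOut f v = 0) :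
    ∃ u, 0 < netOut f u := by
  by_contra hcon
  push_neg at hcon
  have h0 := (Finset.sum_eq_zero_iff_of_nonpos (fun i _ => hcon i)).1 (sum_netOut f)
  exact h fun v => h0 v (mem_univ v)

lemma exists_sink (f : V → V → ℝ) (hf : ∀ x y, 0 ≤ f x y) (u : V) (hu : 0 < netOut f u) :
    ∃ v, Relation.ReflTransGen (fun a b => 0 < f a b) u v ∧ netOut f v < 0 := by
  by_contra hcon
  push_neg at hcon
  set R : Finset V :=
    univ.filter (fun v => Relation.ReflTransGen (fun a b => 0 < f a b) u v) with hR
  have huR : u ∈ R := Finset.mem_filter.2 ⟨mem_univ u, Relation.ReflTransGen.refl⟩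
  have hmemR : ∀ v, v ∈ R ↔ Relation.ReflTransGen (fun a b => 0 < f a b) u v := by
    intro v; simp [hR]
  have hcross : ∀ v ∈ R, ∀ y ∈ Rᶜ, f v y = 0 := by
    intro v hv y hy
    rcases (hf v y).eq_or_lt with h | h
    · exact h.symm
    · exact absurd ((hmemR y).2 (Relation.ReflTransGen.tail ((hmemR v).1 hv) h))
        (by simpa using hy)
  have hsplit : ∑ v ∈ R, netOut f v
      = (∑ v ∈ R, ∑ y ∈ R, (f v y - f y v)) + ∑ v ∈ R, ∑ y ∈ Rᶜ, (f v y - f y v) := by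
    rw [← Finset.sum_add_distrib]
    refine Finset.sum_congr rfl fun v _ => ?_
    exact (Finset.sum_add_sum_compl R _).symm
  have hzero : ∑ v ∈ R, ∑ y ∈ R, (f v y - f y v) = 0 := by
    have hc : ∑ v ∈ R, ∑ y ∈ R, f v y = ∑ v ∈ R, ∑ y ∈ R, f y v := Finset.sum_comm
    simp [Finset.sum_sub_distrib, hc]
  have hneg : ∑ v ∈ R, ∑ y ∈ Rᶜ, (f v y - f y v) ≤ 0 := by
    refine Finset.sum_nonpos fun v hv => Finset.sum_nonpos fun y hy => ?_
    rw [hcross v hv y hy]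
    linarith [hf y v]
  have hpos : 0 < ∑ v ∈ R, netOut f v :=
    Finset.sum_pos' (fun v hv => hcon v ((hmemR v).1 hv)) ⟨u, huR, hu⟩
  rw [hsplit, hzero] at hpos
  linarith

lemma decomp : ∀ (n : ℕ) (f : V → V → ℝ), msr f ≤ n → (∀ x y, 0 ≤ f x y) →
    ∃ L : List (V × V × (V → V → ℝ)),
      (∀ p ∈ L, ∀ x y, 0 ≤ p.2.2 x y) ∧
      (∀ p ∈ L, p.1 ≠ p.2.1) ∧
      (∀ p ∈ L, 0 < netOut p.2.2 p.1) ∧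
      (∀ p ∈ L, ∀ x, x ≠ p.1 → x ≠ p.2.1 → netOut p.2.2 x = 0) ∧
      (∀ p ∈ L, netOut p.2.2 p.2.1 = - netOut p.2.2 p.1) ∧
      (∀ x y, (L.map (fun p => p.2.2 x y)).sum ≤ f x y) ∧
      (∀ u, (L.map (fun p => if p.1 = u then netOut p.2.2 p.1 else 0)).sum
          = max (netOut f u) 0) ∧
      (∀ u, (L.map (fun p => if p.2.1 = u then netOut p.2.2 p.1 else 0)).sum
          = max (-netOut f u) 0) := by
  intro n
  induction n with
  | zero =>
    intro f hn hf
    have hz : ∀ v, netOut f v = 0 := by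
      by_contra hz
      push_neg at hz
      obtain ⟨v, hv⟩ := hz
      have : v ∈ Finset.univ.filter fun v => netOut f v ≠ 0 := by simp [hv]
      have h1 : 0 < (Finset.univ.filter fun v => netOut f v ≠ 0).card :=
        Finset.card_pos.2 ⟨v, this⟩
      unfold msr at hn
      omega
    refine ⟨[], by simp, by simp, by simp, by simp, by simp, ?_, ?_, ?_⟩
    · intro x y; simpa using hf x y
    · intro u; simp [hz u]
    · intro u; simp [hz u]
  | succ n ih =>
    intro f hn hf
    by_cases hz : ∀ v, netOut f v = 0
    · refine ⟨[], by simp, by simp, by simp, by simp, by simp, ?_, ?_, ?_⟩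
      · intro x y; simpa using hf x y
      · intro u; simp [hz u]
      · intro u; simp [hz u]
    obtain ⟨u, hu⟩ := exists_pos_netOut f hz
    obtain ⟨v, huv, hv⟩ := exists_sink f hf u hu
    have hune : u ≠ v := fun h => by rw [h] at hu; linarith
    obtain ⟨l₀, hch₀, hlast₀⟩ := exists_chain_lastOf huv
    obtain ⟨l, hch, hnd, hlast, -⟩ := exists_nodup_chain l₀.length l₀ u le_rfl hch₀
    rw [hlast₀] at hlast
    have hlne : l ≠ [] := by
      rintro rfl
      simp at hlast
      exact hune hlast
    set w : ℝ := min (edgeMin f u l) (min (netOut f u) (-netOut f v)) with hw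
    have hwpos : 0 < w :=
      lt_min (edgeMin_pos f u l hlne hch) (lt_min hu (by linarith))
    have hwe : w ≤ edgeMin f u l := min_le_left _ _
    have hwu : w ≤ netOut f u := (min_le_right _ _).trans (min_le_left _ _)
    have hwv : w ≤ -netOut f v := (min_le_right _ _).trans (min_le_right _ _)
    set h : V → V → ℝ := pathFlow w (u :: l) with hhdef
    have hh0 : ∀ x y, 0 ≤ h x y := fun x y => pathFlow_nonneg hwpos.le _ x y
    have hhf : ∀ x y, h x y ≤ f x y := fun x y => pathFlow_le f hf hwpos.le u l hnd hwe x y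
    have hnoh : ∀ x, netOut h x = (if x = u then w else 0) - (if x = v then w else 0) := by
      intro x
      rw [hhdef, netOut_pathFlow w u l hnd x, hlast]
    have hnohu : netOut h u = w := by rw [hnoh]; simp [hune]
    have hnohv : netOut h v = -w := by rw [hnoh]; simp [hune.symm]
    set f' : V → V → ℝ := fun x y => f x y - h x y with hf'def
    have hf'0 : ∀ x y, 0 ≤ f' x y := fun x y => by simp [hf'def]; exact hhf x y
    have hnof' : ∀ x, netOut f' x = netOut f x - netOut h x := fun x => netOut_sub f h x
    -- support inclusions
    have hsupp : (Finset.univ.filter fun p : V × V => f' p.1 p.2 ≠ 0)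
        ⊆ (Finset.univ.filter fun p : V × V => f p.1 p.2 ≠ 0) := by
      intro p hp
      simp only [Finset.mem_filter, Finset.mem_univ, true_and] at hp ⊢
      intro h0
      apply hp
      have h1 := hh0 p.1 p.2
      have h2 := hhf p.1 p.2
      simp [hf'def]
      linarith
    have hnz : (Finset.univ.filter fun x => netOut f' x ≠ 0)
        ⊆ (Finset.univ.filter fun x => netOut f x ≠ 0) := by
      intro x hx
      simp only [Finset.mem_filter, Finset.mem_univ, true_and] at hx ⊢
      intro h0
      apply hx
      rw [hnof', h0, hnoh]
      have hxu : x ≠ u := fun hh => by rw [hh] at h0; linarith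
      have hxv : x ≠ v := fun hh => by rw [hh] at h0; linarith
      simp [hxu, hxv]
    have hmsr : msr f' < msr f := by
      have hcase : w = edgeMin f u l ∨ w = netOut f u ∨ w = -netOut f v := by
        rcases min_choice (edgeMin f u l) (min (netOut f u) (-netOut f v)) with h1 | h1
        · exact Or.inl (hw.trans h1)
        · rcases min_choice (netOut f u) (-netOut f v) with h2 | h2
          · exact Or.inr (Or.inl ((hw.trans h1).trans h2))
          · exact Or.inr (Or.inr ((hw.trans h1).trans h2))
      rcases hcase with hc | hc | hc
      · -- support strictly decreases
        obtain ⟨x, y, hxy, hpf⟩ := edgeMin_attained f hwpos u l hlne hnd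
        have hfxy : f x y = w := by rw [← hxy, hc]
        have hmem : (x, y) ∈ Finset.univ.filter fun p : V × V => f p.1 p.2 ≠ 0 := by
          simp [hfxy]; linarith
        have hhxy : h x y = w := by rw [hhdef]; exact hpf
        have hnmem : (x, y) ∉ Finset.univ.filter fun p : V × V => f' p.1 p.2 ≠ 0 := by
          simp [hf'def, hfxy, hhxy]
        have h1 : (Finset.univ.filter fun p : V × V => f' p.1 p.2 ≠ 0).card
            < (Finset.univ.filter fun p : V × V => f p.1 p.2 ≠ 0).card :=
          Finset.card_lt_card (Finset.ssubset_iff_of_subset hsupp |>.2 ⟨(x,y), hmem, hnmem⟩)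
        have h2 := Finset.card_le_card hnz
        unfold msr; omega
      · have hmem : u ∈ Finset.univ.filter fun x => netOut f x ≠ 0 := by
          simp; linarith
        have hnmem : u ∉ Finset.univ.filter fun x => netOut f' x ≠ 0 := by
          simp [hnof', hnohu, ← hc]
        have h1 : (Finset.univ.filter fun x => netOut f' x ≠ 0).card
            < (Finset.univ.filter fun x => netOut f x ≠ 0).card :=
          Finset.card_lt_card (Finset.ssubset_iff_of_subset hnz |>.2 ⟨u, hmem, hnmem⟩)
        have h2 := Finset.card_le_card hsupp
        unfold msr; omega
      · have hmem : v ∈ Finset.univ.filter fun x => netOut f x ≠ 0 := by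
          simp; linarith
        have hnmem : v ∉ Finset.univ.filter fun x => netOut f' x ≠ 0 := by
          simp only [Finset.mem_filter, Finset.mem_univ, true_and, not_not]
          rw [hnof', hnohv]
          linarith [hc]
        have h1 : (Finset.univ.filter fun x => netOut f' x ≠ 0).card
            < (Finset.univ.filter fun x => netOut f x ≠ 0).card :=
          Finset.card_lt_card (Finset.ssubset_iff_of_subset hnz |>.2 ⟨v, hmem, hnmem⟩)
        have h2 := Finset.card_le_card hsupp
        unfold msr; omega
    obtain ⟨L', c1, c2, c3, c4, c5, c6, c7, c8⟩ := ih f' (by omega) hf'0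
    refine ⟨(u, v, h) :: L', ?_, ?_, ?_, ?_, ?_, ?_, ?_, ?_⟩
    · intro p hp'
      rcases List.mem_cons.1 hp' with rfl | hp
      · exact hh0
      · exact c1 p hp
    · intro p hp'
      rcases List.mem_cons.1 hp' with rfl | hp
      · exact hune
      · exact c2 p hp
    · intro p hp'
      rcases List.mem_cons.1 hp' with rfl | hp
      · simpa [hnohu] using hwpos
      · exact c3 p hp
    · intro p hp'
      rcases List.mem_cons.1 hp' with rfl | hp
      · intro x hxu hxv
        rw [hnoh]; simp [hxu, hxv]
      · exact c4 p hp
    · intro p hp'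
      rcases List.mem_cons.1 hp' with rfl | hp
      · simp only
        rw [hnohu, hnohv]
      · exact c5 p hp
    · intro x y
      simp only [List.map_cons, List.sum_cons]
      have := c6 x y
      simp only [hf'def] at this
      linarith
    · intro u'
      simp only [List.map_cons, List.sum_cons]
      rw [c7 u']
      rcases eq_or_ne u u' with rfl | huu'
      · rw [if_pos rfl]
        simp only [hnohu]
        rw [hnof' u, hnohu]
        rw [max_eq_left (by linarith), max_eq_left (by linarith)]
        ring
      · rw [if_neg huu']
        rcases eq_or_ne v u' with rfl | hvu'
        · rw [hnof' v, hnohv]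
          rw [max_eq_right (by linarith), max_eq_right (by linarith)]
          ring
        · rw [hnof' u', hnoh u']
          simp [Ne.symm huu', Ne.symm hvu']
    · intro u'
      simp only [List.map_cons, List.sum_cons]
      rw [c8 u']
      rcases eq_or_ne v u' with rfl | hvu'
      · rw [if_pos rfl]
        simp only [hnohu]
        rw [hnof' v, hnohv]
        rw [max_eq_left (by linarith), max_eq_left (by linarith)]
        ring
      · rw [if_neg hvu']
        rcases eq_or_ne u u' with rfl | huu'
        · rw [hnof' u, hnohu]
          rw [max_eq_right (by linarith), max_eq_right (by linarith)]
          ring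
        · rw [hnof' u', hnoh u']
          simp [Ne.symm huu', Ne.symm hvu']
lemma sum_map_neg {α : Type*} (l : List α) (f : α → ℝ) :
    (l.map (fun x => -(f x))).sum = -((l.map f).sum) := by
  induction l with
  | nil => simp
  | cons a l ih => simp [ih]; ring

lemma sum_map_add {α : Type*} (l : List α) (f g : α → ℝ) :
    (l.map (fun x => f x + g x)).sum = (l.map f).sum + (l.map g).sum := by
  induction l with
  | nil => simp
  | cons a l ih => simp [ih]; ring

lemma sum_map_sub {α : Type*} (l : List α) (f g : α → ℝ) :
    (l.map (fun x => f x - g x)).sum = (l.map f).sum - (l.map g).sum := by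
  induction l with
  | nil => simp
  | cons a l ih => simp [ih]; ring

lemma finsum_listsum {α β : Type*} (s : Finset β) (L : List α) (F : α → β → ℝ) :
    ∑ i ∈ s, (L.map (fun p => F p i)).sum = (L.map (fun p => ∑ i ∈ s, F p i)).sum := by
  induction L with
  | nil => simp
  | cons q L ih => simp [List.map_cons, List.sum_cons, Finset.sum_add_distrib, ih]

lemma netOut_listSum {α : Type*} (L : List α) (F : α → V → V → ℝ) (x : V) :
    netOut (fun a b => (L.map (fun p => F p a b)).sum) x
      = (L.map (fun p => netOut (F p) x)).sum := by
  simp only [netOut]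
  rw [Finset.sum_congr rfl
    (fun y _ => (sum_map_sub L (fun p => F p x y) (fun p => F p y x)).symm)]
  rw [finsum_listsum]

lemma max_abs_le (z c : ℝ) (hc : 0 ≤ c) : |max z 0 - c| ≤ |z - c| := by
  rcases le_or_gt 0 z with h | h
  · rw [max_eq_left h]
  · rw [max_eq_right h.le, zero_sub, abs_neg, abs_of_nonneg hc, abs_sub_comm,
      abs_of_nonneg (by linarith)]
    linarith

lemma max_le_abs_neg (z c : ℝ) (hc : 0 ≤ c) : max z 0 ≤ |(-z) - c| := by
  rcases le_or_gt z 0 with h | h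
  · rw [max_eq_right h]; exact abs_nonneg _
  · rw [max_eq_left h.le, abs_of_nonpos (by linarith)]; linarith

lemma key_eq (M D Q szv c : ℝ) (hc : c ≠ 0) :
    M - D - Q / c = (M - szv / c) + (szv - Q) / c - D := by
  field_simp
  ring

lemma abs_three (A B C : ℝ) (hB : 0 ≤ B) (hC : 0 ≤ C) : |A + B - C| ≤ |A| + B + C := by
  rcases le_or_gt 0 (A + B - C) with h | h
  · rw [abs_of_nonneg h]; linarith [le_abs_self A]
  · rw [abs_of_neg h]; linarith [neg_abs_le A]

lemma max_add_max_neg (z : ℝ) : max z 0 + max (-z) 0 = |z| := by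
  rcases le_or_gt 0 z with h | h
  · rw [max_eq_left h, max_eq_right (by linarith), abs_of_nonneg h]; ring
  · rw [max_eq_right h.le, max_eq_left (by linarith), abs_of_neg h]; ring


end Aux17

/-- Lemma on turning a nearly-proper, nearly-balanced improper flow into a proper
`ST` flow: given `0 < θ < 1/9` and a nonnegative (possibly improper) flow `f` whose
imbalance off `S ∪ T` and whose deviation from balance on `S` and `T` are both at most
`θ·size(f)`, there is a proper `ST` flow `g` dominated by `f`, of volume at least
`(1−2θ)·size(f)`, which is `9θ`-near-balanced. -/
theorem stmt17 {V : Type*} [Fintype V] [DecidableEq V]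
    (S T : Finset V) (hS : S.Nonempty) (hT : T.Nonempty) (hST : Disjoint S T)
    (θ : ℝ) (hθ0 : 0 < θ) (hθ : θ < 1 / 9)
    (f : V → V → ℝ) (hf : ∀ x y, 0 ≤ f x y)
    (sz : ℝ) (hsz : sz = (1 / 2) * ∑ v, |netOut f v|)
    (ha : ∑ v ∈ Finset.univ \ (S ∪ T), |netOut f v| ≤ θ * sz)
    (hb : ∑ v ∈ S, |netOut f v - sz / S.card| + ∑ v ∈ T, |(- netOut f v) - sz / T.card|
            ≤ θ * sz) :
    ∃ g : V → V → ℝ,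
      (∀ x y, 0 ≤ g x y ∧ g x y ≤ f x y) ∧
      (∀ v, v ∉ S → v ∉ T → netOut g v = 0) ∧
      (∀ s ∈ S, 0 ≤ netOut g s) ∧ (∀ t ∈ T, netOut g t ≤ 0) ∧
      (∑ s ∈ S, netOut g s = ∑ t ∈ T, (- netOut g t)) ∧
      ((1 - 2 * θ) * sz ≤ ∑ s ∈ S, netOut g s) ∧
      (∑ v ∈ S, |netOut g v - (∑ s ∈ S, netOut g s) / S.card| +
          ∑ v ∈ T, |(- netOut g v) - (∑ s ∈ S, netOut g s) / T.card|
        ≤ 9 * θ * ∑ s ∈ S, netOut g s) := by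
  obtain ⟨L, c1, c2, c3, c4, c5, c6, c7, c8⟩ := Aux17.decomp (Aux17.msr f) f le_rfl hf
  have hw0 : ∀ p ∈ L, 0 ≤ netOut p.2.2 p.1 := fun p hp => (c3 p hp).le
  have hSc : (0:ℝ) < S.card := by exact_mod_cast Finset.card_pos.mpr hS
  have hTc : (0:ℝ) < T.card := by exact_mod_cast Finset.card_pos.mpr hT
  have hsz0 : 0 ≤ sz := by rw [hsz]; positivity
  have hper : ∀ p ∈ L, ∀ x, netOut p.2.2 x
      = (if p.1 = x then netOut p.2.2 p.1 else 0)
        - (if p.2.1 = x then netOut p.2.2 p.1 else 0) := by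
    intro p hp x
    by_cases h1 : p.1 = x
    · have h2 : p.2.1 ≠ x := fun hh => (c2 p hp) (h1.trans hh.symm)
      rw [if_pos h1, if_neg h2, ← h1, sub_zero]
    · by_cases h2 : p.2.1 = x
      · rw [if_neg h1, if_pos h2, ← h2, c5 p hp, zero_sub]
      · rw [if_neg h1, if_neg h2,
          c4 p hp x (fun hh => h1 hh.symm) (fun hh => h2 hh.symm), sub_zero]
  set g : V → V → ℝ :=
    fun x y => (L.map (fun p => if p.1 ∈ S ∧ p.2.1 ∈ T then p.2.2 x y else 0)).sum with hgdef
  have hgnn : ∀ x y, 0 ≤ g x y := by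
    intro x y
    apply List.sum_nonneg
    intro z hz
    obtain ⟨p, hp, rfl⟩ := List.mem_map.1 hz
    by_cases hK : p.1 ∈ S ∧ p.2.1 ∈ T
    · rw [if_pos hK]; exact c1 p hp x y
    · rw [if_neg hK]
  have hgle : ∀ x y, g x y ≤ f x y := by
    intro x y
    refine le_trans (List.sum_le_sum (l := L)
      (f := fun p => if p.1 ∈ S ∧ p.2.1 ∈ T then p.2.2 x y else 0)
      (g := fun p => p.2.2 x y) ?_) (c6 x y)
    intro p hp
    by_cases hK : p.1 ∈ S ∧ p.2.1 ∈ T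
    · rw [if_pos hK]
    · rw [if_neg hK]; exact c1 p hp x y
  have hgnet : ∀ x, netOut g x = (L.map (fun p =>
      if p.1 ∈ S ∧ p.2.1 ∈ T then
        ((if p.1 = x then netOut p.2.2 p.1 else 0) - (if p.2.1 = x then netOut p.2.2 p.1 else 0))
      else 0)).sum := by
    intro x
    rw [hgdef]
    rw [Aux17.netOut_listSum L (fun p a b => if p.1 ∈ S ∧ p.2.1 ∈ T then p.2.2 a b else 0) x]
    congr 1
    refine List.map_congr_left fun p hp => ?_
    by_cases hK : p.1 ∈ S ∧ p.2.1 ∈ T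
    · have he : (fun a b => if p.1 ∈ S ∧ p.2.1 ∈ T then p.2.2 a b else 0) = p.2.2 := by
        funext a b; rw [if_pos hK]
      rw [he, if_pos hK]; exact hper p hp x
    · have he : (fun a b => if p.1 ∈ S ∧ p.2.1 ∈ T then p.2.2 a b else 0)
          = (fun _ _ => (0:ℝ)) := by
        funext a b; rw [if_neg hK]
      rw [he, if_neg hK]
      simp [netOut]
  have hgS : ∀ s ∈ S, netOut g s
      = (L.map (fun p => if p.1 = s ∧ p.2.1 ∈ T then netOut p.2.2 p.1 else 0)).sum := by
    intro s hs
    have hsT : s ∉ T := Finset.disjoint_left.1 hST hs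
    rw [hgnet s]
    congr 1
    refine List.map_congr_left fun p hp => ?_
    by_cases h2 : p.2.1 ∈ T
    · have h3 : p.2.1 ≠ s := fun hh => hsT (hh ▸ h2)
      by_cases h1 : p.1 = s
      · have hpS : p.1 ∈ S := by rw [h1]; exact hs
        have hc1 : p.1 ∈ S ∧ p.2.1 ∈ T := ⟨hpS, h2⟩
        have hc2 : p.1 = s ∧ p.2.1 ∈ T := ⟨h1, h2⟩
        rw [if_pos hc1, if_pos hc2, if_pos h1, if_neg h3, sub_zero]
      · rw [if_neg (fun hh : p.1 = s ∧ p.2.1 ∈ T => h1 hh.1)]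
        by_cases hK : p.1 ∈ S
        · have hc1 : p.1 ∈ S ∧ p.2.1 ∈ T := ⟨hK, h2⟩
          rw [if_pos hc1, if_neg h1, if_neg h3, sub_zero]
        · rw [if_neg (fun hh : p.1 ∈ S ∧ p.2.1 ∈ T => hK hh.1)]
    · rw [if_neg (fun hh : p.1 ∈ S ∧ p.2.1 ∈ T => h2 hh.2),
        if_neg (fun hh : p.1 = s ∧ p.2.1 ∈ T => h2 hh.2)]
  have hgT : ∀ t ∈ T, netOut g t
      = -((L.map (fun p => if p.2.1 = t ∧ p.1 ∈ S then netOut p.2.2 p.1 else 0)).sum) := by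
    intro t ht
    have htS : t ∉ S := Finset.disjoint_right.1 hST ht
    rw [hgnet t, ← Aux17.sum_map_neg L (fun p => if p.2.1 = t ∧ p.1 ∈ S then netOut p.2.2 p.1 else 0)]
    congr 1
    refine List.map_congr_left fun p hp => ?_
    by_cases h1 : p.1 ∈ S
    · have h4 : p.1 ≠ t := fun hh => htS (hh ▸ h1)
      by_cases h2 : p.2.1 = t
      · have hpT : p.2.1 ∈ T := by rw [h2]; exact ht
        have hc1 : p.1 ∈ S ∧ p.2.1 ∈ T := ⟨h1, hpT⟩
        have hc2 : p.2.1 = t ∧ p.1 ∈ S := ⟨h2, h1⟩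
        rw [if_pos hc1, if_pos hc2, if_neg h4, if_pos h2, zero_sub]
      · by_cases h5 : p.2.1 ∈ T
        · have hc1 : p.1 ∈ S ∧ p.2.1 ∈ T := ⟨h1, h5⟩
          rw [if_pos hc1, if_neg h4, if_neg h2,
            if_neg (fun hh : p.2.1 = t ∧ p.1 ∈ S => h2 hh.1), sub_zero, neg_zero]
        · rw [if_neg (fun hh : p.1 ∈ S ∧ p.2.1 ∈ T => h5 hh.2),
            if_neg (fun hh : p.2.1 = t ∧ p.1 ∈ S => h5 (by rw [hh.1]; exact ht)), neg_zero]
    · rw [if_neg (fun hh : p.1 ∈ S ∧ p.2.1 ∈ T => h1 hh.1),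
        if_neg (fun hh : p.2.1 = t ∧ p.1 ∈ S => h1 hh.2), neg_zero]
  have hgO : ∀ v, v ∉ S → v ∉ T → netOut g v = 0 := by
    intro v hvS hvT
    rw [hgnet v]
    apply List.sum_eq_zero
    intro z hz
    obtain ⟨p, hp, rfl⟩ := List.mem_map.1 hz
    by_cases hK : p.1 ∈ S ∧ p.2.1 ∈ T
    · have n1 : p.1 ≠ v := fun hh => hvS (hh ▸ hK.1)
      have n2 : p.2.1 ≠ v := fun hh => hvT (hh ▸ hK.2)
      rw [if_pos hK, if_neg n1, if_neg n2, sub_zero]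
    · rw [if_neg hK]
  have hvolS : ∑ s ∈ S, netOut g s
      = (L.map (fun p => if p.1 ∈ S ∧ p.2.1 ∈ T then netOut p.2.2 p.1 else 0)).sum := by
    rw [Finset.sum_congr rfl (fun s hs => hgS s hs),
      Aux17.finsum_listsum S L (fun p s => if p.1 = s ∧ p.2.1 ∈ T then netOut p.2.2 p.1 else 0)]
    congr 1
    refine List.map_congr_left fun p hp => ?_
    by_cases h2 : p.2.1 ∈ T
    · rw [Finset.sum_congr rfl (fun s _ =>
        show (if p.1 = s ∧ p.2.1 ∈ T then netOut p.2.2 p.1 else 0)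
            = (if p.1 = s then netOut p.2.2 p.1 else 0) from by
          by_cases h1 : p.1 = s
          · have hc : p.1 = s ∧ p.2.1 ∈ T := ⟨h1, h2⟩
            rw [if_pos hc, if_pos h1]
          · rw [if_neg (fun hh : p.1 = s ∧ p.2.1 ∈ T => h1 hh.1), if_neg h1])]
      rw [Finset.sum_ite_eq S p.1 (fun _ => netOut p.2.2 p.1)]
      by_cases h1 : p.1 ∈ S
      · have hc : p.1 ∈ S ∧ p.2.1 ∈ T := ⟨h1, h2⟩
        rw [if_pos h1, if_pos hc]
      · rw [if_neg h1, if_neg (fun hh : p.1 ∈ S ∧ p.2.1 ∈ T => h1 hh.1)]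
    · rw [if_neg (fun hh : p.1 ∈ S ∧ p.2.1 ∈ T => h2 hh.2)]
      apply Finset.sum_eq_zero
      intro s _
      rw [if_neg (fun hh : p.1 = s ∧ p.2.1 ∈ T => h2 hh.2)]
  have hvolT : ∑ t ∈ T, -netOut g t
      = (L.map (fun p => if p.1 ∈ S ∧ p.2.1 ∈ T then netOut p.2.2 p.1 else 0)).sum := by
    rw [Finset.sum_congr rfl (fun t ht =>
      show -netOut g t
          = (L.map (fun p => if p.2.1 = t ∧ p.1 ∈ S then netOut p.2.2 p.1 else 0)).sum from by
        rw [hgT t ht, neg_neg]),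
      Aux17.finsum_listsum T L (fun p t => if p.2.1 = t ∧ p.1 ∈ S then netOut p.2.2 p.1 else 0)]
    congr 1
    refine List.map_congr_left fun p hp => ?_
    by_cases h1 : p.1 ∈ S
    · rw [Finset.sum_congr rfl (fun t _ =>
        show (if p.2.1 = t ∧ p.1 ∈ S then netOut p.2.2 p.1 else 0)
            = (if p.2.1 = t then netOut p.2.2 p.1 else 0) from by
          by_cases h2 : p.2.1 = t
          · have hc : p.2.1 = t ∧ p.1 ∈ S := ⟨h2, h1⟩
            rw [if_pos hc, if_pos h2]
          · rw [if_neg (fun hh : p.2.1 = t ∧ p.1 ∈ S => h2 hh.1), if_neg h2])]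
      rw [Finset.sum_ite_eq T p.2.1 (fun _ => netOut p.2.2 p.1)]
      by_cases h2 : p.2.1 ∈ T
      · have hc : p.1 ∈ S ∧ p.2.1 ∈ T := ⟨h1, h2⟩
        rw [if_pos h2, if_pos hc]
      · rw [if_neg h2, if_neg (fun hh : p.1 ∈ S ∧ p.2.1 ∈ T => h2 hh.2)]
    · rw [if_neg (fun hh : p.1 ∈ S ∧ p.2.1 ∈ T => h1 hh.1)]
      apply Finset.sum_eq_zero
      intro t _
      rw [if_neg (fun hh : p.2.1 = t ∧ p.1 ∈ S => h1 hh.2)]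
  have hW : (L.map (fun p => netOut p.2.2 p.1)).sum = sz := by
    have h0 : (L.map (fun p => netOut p.2.2 p.1)).sum
        = ∑ x, (L.map (fun p => if p.1 = x then netOut p.2.2 p.1 else 0)).sum := by
      rw [Aux17.finsum_listsum Finset.univ L
        (fun p x => if p.1 = x then netOut p.2.2 p.1 else 0)]
      congr 1
      refine List.map_congr_left fun p hp => ?_
      rw [Finset.sum_ite_eq Finset.univ p.1 (fun _ => netOut p.2.2 p.1),
        if_pos (Finset.mem_univ p.1)]
    rw [h0, Finset.sum_congr rfl fun x _ => c7 x]
    have h2 : ∀ x : V, max (netOut f x) 0 = (netOut f x + |netOut f x|)/2 := by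
      intro x
      rcases le_or_gt 0 (netOut f x) with h | h
      · rw [max_eq_left h, abs_of_nonneg h]; ring
      · rw [max_eq_right h.le, abs_of_neg h]; ring
    rw [Finset.sum_congr rfl fun x _ => h2 x, ← Finset.sum_div, Finset.sum_add_distrib,
      Aux17.sum_netOut, hsz]
    ring
  have hP1eq : (L.map (fun p => if p.1 ∉ S then netOut p.2.2 p.1 else 0)).sum
      = ∑ x ∈ Finset.univ \ S, max (netOut f x) 0 := by
    rw [Finset.sum_congr rfl (fun x _ => (c7 x).symm),
      Aux17.finsum_listsum (Finset.univ \ S) L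
        (fun p x => if p.1 = x then netOut p.2.2 p.1 else 0)]
    congr 1
    refine List.map_congr_left fun p hp => ?_
    rw [Finset.sum_ite_eq (Finset.univ \ S) p.1 (fun _ => netOut p.2.2 p.1)]
    by_cases h1 : p.1 ∈ S
    · rw [if_neg (not_not_intro h1), if_neg (by simp [h1])]
    · rw [if_pos h1, if_pos (by simp [h1])]
  have hP2eq : (L.map (fun p => if p.2.1 ∉ T then netOut p.2.2 p.1 else 0)).sum
      = ∑ x ∈ Finset.univ \ T, max (-netOut f x) 0 := by
    rw [Finset.sum_congr rfl (fun x _ => (c8 x).symm),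
      Aux17.finsum_listsum (Finset.univ \ T) L
        (fun p x => if p.2.1 = x then netOut p.2.2 p.1 else 0)]
    congr 1
    refine List.map_congr_left fun p hp => ?_
    rw [Finset.sum_ite_eq (Finset.univ \ T) p.2.1 (fun _ => netOut p.2.2 p.1)]
    by_cases h1 : p.2.1 ∈ T
    · rw [if_neg (not_not_intro h1), if_neg (by simp [h1])]
    · rw [if_pos h1, if_pos (by simp [h1])]
  have hsplitS : Finset.univ \ S = (Finset.univ \ (S ∪ T)) ∪ T := by
    ext x
    simp only [Finset.mem_sdiff, Finset.mem_union, Finset.mem_univ, true_and]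
    constructor
    · intro hx
      by_cases hxT : x ∈ T
      · exact Or.inr hxT
      · exact Or.inl (by tauto)
    · rintro (hx | hx)
      · tauto
      · exact Finset.disjoint_right.1 hST hx
  have hsplitT : Finset.univ \ T = (Finset.univ \ (S ∪ T)) ∪ S := by
    ext x
    simp only [Finset.mem_sdiff, Finset.mem_union, Finset.mem_univ, true_and]
    constructor
    · intro hx
      by_cases hxS : x ∈ S
      · exact Or.inr hxS
      · exact Or.inl (by tauto)
    · rintro (hx | hx)
      · tauto
      · exact Finset.disjoint_left.1 hST hx
  have hdj1 : Disjoint (Finset.univ \ (S ∪ T)) T := by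
    rw [Finset.disjoint_right]
    intro x hx
    simp [hx]
  have hdj2 : Disjoint (Finset.univ \ (S ∪ T)) S := by
    rw [Finset.disjoint_right]
    intro x hx
    simp [hx]
  have hP12 : (L.map (fun p => if p.1 ∉ S then netOut p.2.2 p.1 else 0)).sum
      + (L.map (fun p => if p.2.1 ∉ T then netOut p.2.2 p.1 else 0)).sum
      ≤ 2 * (θ * sz) := by
    rw [hP1eq, hP2eq, hsplitS, hsplitT, Finset.sum_union hdj1, Finset.sum_union hdj2]
    have e1 : ∑ x ∈ Finset.univ \ (S ∪ T), max (netOut f x) 0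
        + ∑ x ∈ Finset.univ \ (S ∪ T), max (-netOut f x) 0
        = ∑ v ∈ Finset.univ \ (S ∪ T), |netOut f v| := by
      rw [← Finset.sum_add_distrib]
      exact Finset.sum_congr rfl fun x _ => Aux17.max_add_max_neg _
    have e2 : ∑ x ∈ T, max (netOut f x) 0 ≤ ∑ v ∈ T, |(- netOut f v) - sz / T.card| :=
      Finset.sum_le_sum fun t _ => Aux17.max_le_abs_neg _ _ (by positivity)
    have e3 : ∑ x ∈ S, max (-netOut f x) 0 ≤ ∑ v ∈ S, |netOut f v - sz / S.card| :=
      Finset.sum_le_sum fun s _ => by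
        simpa using Aux17.max_le_abs_neg (-netOut f s) (sz / S.card) (by positivity)
    linarith
  have hvol_le : (L.map (fun p => if p.1 ∈ S ∧ p.2.1 ∈ T then netOut p.2.2 p.1 else 0)).sum
      ≤ sz := by
    rw [← hW]
    refine List.sum_le_sum fun p hp => ?_
    by_cases hK : p.1 ∈ S ∧ p.2.1 ∈ T
    · rw [if_pos hK]
    · rw [if_neg hK]; exact hw0 p hp
  have hWsplit : sz ≤ (L.map (fun p => if p.1 ∈ S ∧ p.2.1 ∈ T then netOut p.2.2 p.1 else 0)).sum
      + ((L.map (fun p => if p.1 ∉ S then netOut p.2.2 p.1 else 0)).sum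
        + (L.map (fun p => if p.2.1 ∉ T then netOut p.2.2 p.1 else 0)).sum) := by
    rw [← hW, ← Aux17.sum_map_add L (fun p => if p.1 ∉ S then netOut p.2.2 p.1 else 0)
        (fun p => if p.2.1 ∉ T then netOut p.2.2 p.1 else 0),
      ← Aux17.sum_map_add L (fun p => if p.1 ∈ S ∧ p.2.1 ∈ T then netOut p.2.2 p.1 else 0)
        (fun p => (if p.1 ∉ S then netOut p.2.2 p.1 else 0)
          + (if p.2.1 ∉ T then netOut p.2.2 p.1 else 0))]
    refine List.sum_le_sum fun p hp => ?_
    have hwp := hw0 p hp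
    by_cases h1 : p.1 ∈ S
    · by_cases h2 : p.2.1 ∈ T
      · have hc : p.1 ∈ S ∧ p.2.1 ∈ T := ⟨h1, h2⟩
        rw [if_pos hc, if_neg (not_not_intro h1), if_neg (not_not_intro h2)]
        linarith
      · rw [if_neg (fun hh : p.1 ∈ S ∧ p.2.1 ∈ T => h2 hh.2), if_neg (not_not_intro h1),
          if_pos h2]
        linarith
    · have e4 : (0:ℝ) ≤ if p.2.1 ∉ T then netOut p.2.2 p.1 else 0 := by
        by_cases h2 : p.2.1 ∉ T
        · rw [if_pos h2]; exact hwp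
        · rw [if_neg h2]
      rw [if_neg (fun hh : p.1 ∈ S ∧ p.2.1 ∈ T => h1 hh.1), if_pos h1]
      linarith
  have hds : ∀ s ∈ S, netOut g s
      = max (netOut f s) 0
        - (L.map (fun p => if p.1 = s ∧ p.2.1 ∉ T then netOut p.2.2 p.1 else 0)).sum := by
    intro s hs
    have hadd : (L.map (fun p => if p.1 = s ∧ p.2.1 ∈ T then netOut p.2.2 p.1 else 0)).sum
        + (L.map (fun p => if p.1 = s ∧ p.2.1 ∉ T then netOut p.2.2 p.1 else 0)).sum
        = max (netOut f s) 0 := by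
      rw [← Aux17.sum_map_add L (fun p => if p.1 = s ∧ p.2.1 ∈ T then netOut p.2.2 p.1 else 0)
        (fun p => if p.1 = s ∧ p.2.1 ∉ T then netOut p.2.2 p.1 else 0), ← c7 s]
      congr 1
      refine List.map_congr_left fun p hp => ?_
      by_cases h1 : p.1 = s
      · by_cases h2 : p.2.1 ∈ T
        · have hc : p.1 = s ∧ p.2.1 ∈ T := ⟨h1, h2⟩
          rw [if_pos hc, if_neg (fun hh : p.1 = s ∧ p.2.1 ∉ T => hh.2 h2), if_pos h1, add_zero]
        · have hc : p.1 = s ∧ p.2.1 ∉ T := ⟨h1, h2⟩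
          rw [if_neg (fun hh : p.1 = s ∧ p.2.1 ∈ T => h2 hh.2), if_pos hc, if_pos h1, zero_add]
      · rw [if_neg (fun hh : p.1 = s ∧ p.2.1 ∈ T => h1 hh.1),
          if_neg (fun hh : p.1 = s ∧ p.2.1 ∉ T => h1 hh.1), if_neg h1, add_zero]
    rw [hgS s hs, ← hadd]
    ring
  have hd0 : ∀ s : V,
      0 ≤ (L.map (fun p => if p.1 = s ∧ p.2.1 ∉ T then netOut p.2.2 p.1 else 0)).sum := by
    intro s
    refine List.sum_nonneg fun z hz => ?_
    obtain ⟨p, hp, rfl⟩ := List.mem_map.1 hz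
    by_cases hK : p.1 = s ∧ p.2.1 ∉ T
    · rw [if_pos hK]; exact hw0 p hp
    · rw [if_neg hK]
  have hDsum : ∑ s ∈ S,
        (L.map (fun p => if p.1 = s ∧ p.2.1 ∉ T then netOut p.2.2 p.1 else 0)).sum
      ≤ (L.map (fun p => if p.2.1 ∉ T then netOut p.2.2 p.1 else 0)).sum := by
    rw [Aux17.finsum_listsum S L
      (fun p s => if p.1 = s ∧ p.2.1 ∉ T then netOut p.2.2 p.1 else 0)]
    refine List.sum_le_sum fun p hp => ?_
    by_cases h2 : p.2.1 ∈ T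
    · rw [if_neg (not_not_intro h2)]
      refine le_of_eq (Finset.sum_eq_zero fun s _ => ?_)
      rw [if_neg (fun hh : p.1 = s ∧ p.2.1 ∉ T => hh.2 h2)]
    · rw [if_pos h2,
        Finset.sum_congr rfl (fun s _ =>
          show (if p.1 = s ∧ p.2.1 ∉ T then netOut p.2.2 p.1 else 0)
              = (if p.1 = s then netOut p.2.2 p.1 else 0) from by
            by_cases h1 : p.1 = s
            · have hc : p.1 = s ∧ p.2.1 ∉ T := ⟨h1, h2⟩
              rw [if_pos hc, if_pos h1]
            · rw [if_neg (fun hh : p.1 = s ∧ p.2.1 ∉ T => h1 hh.1), if_neg h1]),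
        Finset.sum_ite_eq S p.1 (fun _ => netOut p.2.2 p.1)]
      by_cases h1 : p.1 ∈ S
      · rw [if_pos h1]
      · rw [if_neg h1]; exact hw0 p hp
  have het : ∀ t ∈ T, -netOut g t
      = max (-netOut f t) 0
        - (L.map (fun p => if p.2.1 = t ∧ p.1 ∉ S then netOut p.2.2 p.1 else 0)).sum := by
    intro t ht
    have hadd : (L.map (fun p => if p.2.1 = t ∧ p.1 ∈ S then netOut p.2.2 p.1 else 0)).sum
        + (L.map (fun p => if p.2.1 = t ∧ p.1 ∉ S then netOut p.2.2 p.1 else 0)).sum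
        = max (-netOut f t) 0 := by
      rw [← Aux17.sum_map_add L (fun p => if p.2.1 = t ∧ p.1 ∈ S then netOut p.2.2 p.1 else 0)
        (fun p => if p.2.1 = t ∧ p.1 ∉ S then netOut p.2.2 p.1 else 0), ← c8 t]
      congr 1
      refine List.map_congr_left fun p hp => ?_
      by_cases h1 : p.2.1 = t
      · by_cases h2 : p.1 ∈ S
        · have hc : p.2.1 = t ∧ p.1 ∈ S := ⟨h1, h2⟩
          rw [if_pos hc, if_neg (fun hh : p.2.1 = t ∧ p.1 ∉ S => hh.2 h2), if_pos h1, add_zero]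
        · have hc : p.2.1 = t ∧ p.1 ∉ S := ⟨h1, h2⟩
          rw [if_neg (fun hh : p.2.1 = t ∧ p.1 ∈ S => h2 hh.2), if_pos hc, if_pos h1, zero_add]
      · rw [if_neg (fun hh : p.2.1 = t ∧ p.1 ∈ S => h1 hh.1),
          if_neg (fun hh : p.2.1 = t ∧ p.1 ∉ S => h1 hh.1), if_neg h1, add_zero]
    rw [hgT t ht, ← hadd]
    ring
  have he0 : ∀ t : V,
      0 ≤ (L.map (fun p => if p.2.1 = t ∧ p.1 ∉ S then netOut p.2.2 p.1 else 0)).sum := by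
    intro t
    refine List.sum_nonneg fun z hz => ?_
    obtain ⟨p, hp, rfl⟩ := List.mem_map.1 hz
    by_cases hK : p.2.1 = t ∧ p.1 ∉ S
    · rw [if_pos hK]; exact hw0 p hp
    · rw [if_neg hK]
  have hEsum : ∑ t ∈ T,
        (L.map (fun p => if p.2.1 = t ∧ p.1 ∉ S then netOut p.2.2 p.1 else 0)).sum
      ≤ (L.map (fun p => if p.1 ∉ S then netOut p.2.2 p.1 else 0)).sum := by
    rw [Aux17.finsum_listsum T L
      (fun p t => if p.2.1 = t ∧ p.1 ∉ S then netOut p.2.2 p.1 else 0)]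
    refine List.sum_le_sum fun p hp => ?_
    by_cases h2 : p.1 ∈ S
    · rw [if_neg (not_not_intro h2)]
      refine le_of_eq (Finset.sum_eq_zero fun t _ => ?_)
      rw [if_neg (fun hh : p.2.1 = t ∧ p.1 ∉ S => hh.2 h2)]
    · rw [if_pos h2,
        Finset.sum_congr rfl (fun t _ =>
          show (if p.2.1 = t ∧ p.1 ∉ S then netOut p.2.2 p.1 else 0)
              = (if p.2.1 = t then netOut p.2.2 p.1 else 0) from by
            by_cases h1 : p.2.1 = t
            · have hc : p.2.1 = t ∧ p.1 ∉ S := ⟨h1, h2⟩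
              rw [if_pos hc, if_pos h1]
            · rw [if_neg (fun hh : p.2.1 = t ∧ p.1 ∉ S => h1 hh.1), if_neg h1]),
        Finset.sum_ite_eq T p.2.1 (fun _ => netOut p.2.2 p.1)]
      by_cases h1 : p.2.1 ∈ T
      · rw [if_pos h1]
      · rw [if_neg h1]; exact hw0 p hp
  have hsv : 0 ≤ sz - (L.map (fun p => if p.1 ∈ S ∧ p.2.1 ∈ T then netOut p.2.2 p.1 else 0)).sum := by
    linarith [hvol_le]
  have hboundS : ∑ v ∈ S, |netOut g v
        - (L.map (fun p => if p.1 ∈ S ∧ p.2.1 ∈ T then netOut p.2.2 p.1 else 0)).sum / S.card|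
      ≤ (∑ v ∈ S, |netOut f v - sz / S.card|)
        + (sz - (L.map (fun p => if p.1 ∈ S ∧ p.2.1 ∈ T then netOut p.2.2 p.1 else 0)).sum)
        + ∑ s ∈ S, (L.map (fun p => if p.1 = s ∧ p.2.1 ∉ T then netOut p.2.2 p.1 else 0)).sum := by
    have step : ∀ s ∈ S, |netOut g s
          - (L.map (fun p => if p.1 ∈ S ∧ p.2.1 ∈ T then netOut p.2.2 p.1 else 0)).sum / S.card|
        ≤ |netOut f s - sz / S.card|
          + (sz - (L.map (fun p => if p.1 ∈ S ∧ p.2.1 ∈ T then netOut p.2.2 p.1 else 0)).sum) / S.card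
          + (L.map (fun p => if p.1 = s ∧ p.2.1 ∉ T then netOut p.2.2 p.1 else 0)).sum := by
      intro s hs
      rw [hds s hs]
      rw [Aux17.key_eq _ _ _ sz _ (ne_of_gt hSc)]
      refine le_trans (Aux17.abs_three _ _ _ (div_nonneg hsv hSc.le) (hd0 s)) ?_
      have := Aux17.max_abs_le (netOut f s) (sz / S.card) (by positivity)
      linarith
    refine le_trans (Finset.sum_le_sum step) ?_
    rw [Finset.sum_add_distrib, Finset.sum_add_distrib, Finset.sum_const, nsmul_eq_mul,
      mul_comm, div_mul_cancel₀ _ (ne_of_gt hSc)]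
  have hboundT : ∑ v ∈ T, |(-netOut g v)
        - (L.map (fun p => if p.1 ∈ S ∧ p.2.1 ∈ T then netOut p.2.2 p.1 else 0)).sum / T.card|
      ≤ (∑ v ∈ T, |(-netOut f v) - sz / T.card|)
        + (sz - (L.map (fun p => if p.1 ∈ S ∧ p.2.1 ∈ T then netOut p.2.2 p.1 else 0)).sum)
        + ∑ t ∈ T, (L.map (fun p => if p.2.1 = t ∧ p.1 ∉ S then netOut p.2.2 p.1 else 0)).sum := by
    have step : ∀ t ∈ T, |(-netOut g t)
          - (L.map (fun p => if p.1 ∈ S ∧ p.2.1 ∈ T then netOut p.2.2 p.1 else 0)).sum / T.card|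
        ≤ |(-netOut f t) - sz / T.card|
          + (sz - (L.map (fun p => if p.1 ∈ S ∧ p.2.1 ∈ T then netOut p.2.2 p.1 else 0)).sum) / T.card
          + (L.map (fun p => if p.2.1 = t ∧ p.1 ∉ S then netOut p.2.2 p.1 else 0)).sum := by
      intro t ht
      rw [het t ht]
      rw [Aux17.key_eq _ _ _ sz _ (ne_of_gt hTc)]
      refine le_trans (Aux17.abs_three _ _ _ (div_nonneg hsv hTc.le) (he0 t)) ?_
      have := Aux17.max_abs_le (-netOut f t) (sz / T.card) (by positivity)
      linarith
    refine le_trans (Finset.sum_le_sum step) ?_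
    rw [Finset.sum_add_distrib, Finset.sum_add_distrib, Finset.sum_const, nsmul_eq_mul,
      mul_comm, div_mul_cancel₀ _ (ne_of_gt hTc)]
  refine ⟨g, fun x y => ⟨hgnn x y, hgle x y⟩, hgO, ?_, ?_, ?_, ?_, ?_⟩
  · intro s hs
    rw [hgS s hs]
    refine List.sum_nonneg fun z hz => ?_
    obtain ⟨p, hp, rfl⟩ := List.mem_map.1 hz
    by_cases hK : p.1 = s ∧ p.2.1 ∈ T
    · rw [if_pos hK]; exact hw0 p hp
    · rw [if_neg hK]
  · intro t ht
    rw [hgT t ht]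
    refine neg_nonpos.2 (List.sum_nonneg fun z hz => ?_)
    obtain ⟨p, hp, rfl⟩ := List.mem_map.1 hz
    by_cases hK : p.2.1 = t ∧ p.1 ∈ S
    · rw [if_pos hK]; exact hw0 p hp
    · rw [if_neg hK]
  · rw [hvolS]
    exact hvolT.symm
  · rw [hvolS]
    linarith [hWsplit, hP12]
  · rw [hvolS]
    have hvolge : (1 - 2*θ) * sz
        ≤ (L.map (fun p => if p.1 ∈ S ∧ p.2.1 ∈ T then netOut p.2.2 p.1 else 0)).sum := by
      linarith [hWsplit, hP12]
    have hfin : 7*(θ*sz)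
        ≤ 9*θ*(L.map (fun p => if p.1 ∈ S ∧ p.2.1 ∈ T then netOut p.2.2 p.1 else 0)).sum := by
      nlinarith [mul_le_mul_of_nonneg_left hvolge (by linarith : (0:ℝ) ≤ 9*θ),
        mul_nonneg (mul_nonneg hθ0.le hsz0) (by linarith : (0:ℝ) ≤ 2 - 18*θ)]
    linarith [hboundS, hboundT, hDsum, hEsum, hb, hP12, hWsplit, hvol_le]
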